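/- arXiv:1401.8174 — 6 statements merged into one kernel-verified Lean document; each statement's English description precedes it below -/
import Mathlib

section
/- In any path-connected subset of a normed space avoiding pairs of points at positive-integer distance, the diameter is at most 1. -/
theorem stmt_1 {X : Type*} [NormedAddCommGroup X] [NormedSpace ℝ X]
    (P : Set X) (hP : IsPathConnected P)
    (havoid : ∀ u ∈ P, ∀ v ∈ P, ¬∃ n : ℕ, 0 < n ∧ ‖u - v‖ = n) :
    EMetric.diam P ≤ 1 := by
  have key : ∀ u ∈ P, ∀ v ∈ P, dist u v ≤ 1 := by
    intro u hu v hv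
    by_contra h
    push_neg at h
    obtain ⟨γ, hγ⟩ := (hP.joinedIn u hu v hv)
    set f : ℝ → ℝ := fun t => ‖γ.extend t - u‖ with hf
    have hcont : ContinuousOn f (Set.Icc (0:ℝ) 1) :=
      (Continuous.norm ((γ.continuous_extend).sub continuous_const)).continuousOn
    have h0 : f 0 = 0 := by simp [hf]
    have h1 : f 1 = ‖v - u‖ := by simp [hf]
    have hmem : (1:ℝ) ∈ Set.Icc (f 0) (f 1) := by
      constructor
      · rw [h0]; norm_num
      · rw [h1, ← dist_eq_norm, dist_comm]; exact h.le
    obtain ⟨t, ht, hft⟩ := intermediate_value_Icc (by norm_num : (0:ℝ) ≤ 1) hcont hmem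
    have hmemP : γ.extend t ∈ P := by
      rw [γ.extend_apply ht]; exact hγ _
    exact havoid u hu (γ.extend t) hmemP ⟨1, by norm_num, by
      rw [← norm_neg]; simpa [neg_sub] using hft⟩
  apply EMetric.diam_le
  intro x hx y hy
  rw [edist_dist, ← ENNReal.ofReal_one]
  exact ENNReal.ofReal_le_ofReal (key x hx y hy)
end

section
/- The one-dimensional Lebesgue measure of the intersection of a line L with an open set P ⊆ X avoiding integral distances is at most 1. -/
open MeasureTheory

theorem stmt_4 {X : Type*} [NormedAddCommGroup X] [NormedSpace ℝ X]
    (P : Set X) (hP : IsOpen P)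
    (havoid : ∀ u ∈ P, ∀ v ∈ P, ¬∃ n : ℕ, 0 < n ∧ ‖u - v‖ = n)
    (u w : X) (hw : ‖w‖ = 1) :
    volume {α : ℝ | u + α • w ∈ P} ≤ 1 := by
  set S : Set ℝ := {α : ℝ | u + α • w ∈ P} with hSdef
  have hScont : Continuous fun α : ℝ => u + α • w := by continuity
  have hmeas : MeasurableSet S := (hP.preimage hScont).measurableSet
  -- no two points of S differ by a nonzero integer
  have key : ∀ a ∈ S, ∀ b ∈ S, ∀ n : ℤ, a - b = (n : ℝ) → n = 0 := by
    intro a ha b hb n hn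
    by_contra h
    refine havoid (u + a • w) ha (u + b • w) hb ⟨n.natAbs, Int.natAbs_pos.mpr h, ?_⟩
    have hd : (u + a • w) - (u + b • w) = (a - b) • w := by
      rw [sub_smul]; abel
    rw [hd, norm_smul, hw, mul_one, hn, Real.norm_eq_abs, Nat.cast_natAbs, Int.cast_abs]
  set T : ℤ → Set ℝ := fun n => ((fun x : ℝ => x + (n : ℝ)) ⁻¹' S) ∩ Set.Ico 0 1 with hTdef
  have hTmeas : ∀ n, MeasurableSet (T n) :=
    fun n => ((measurable_add_const ((n : ℝ))) hmeas).inter measurableSet_Ico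
  have hTdisj : Pairwise (Function.onFun Disjoint T) := by
    intro n m hnm
    simp only [Function.onFun]
    rw [Set.disjoint_left]
    rintro x ⟨hx1, -⟩ ⟨hx2, -⟩
    have := key _ hx1 _ hx2 (n - m) (by push_cast; ring)
    exact hnm (by omega)
  have hcover : S = ⋃ n : ℤ, S ∩ Set.Ico ((n : ℝ)) (n + 1) := by
    rw [← Set.inter_iUnion, iUnion_Ico_intCast ℝ, Set.inter_univ]
  have hpieces : Pairwise
      (Function.onFun Disjoint (fun n : ℤ => S ∩ Set.Ico ((n : ℝ)) (n + 1))) :=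
    (Set.pairwise_disjoint_Ico_intCast ℝ).mono fun n m h =>
      h.mono Set.inter_subset_right Set.inter_subset_right
  calc volume S = ∑' n : ℤ, volume (S ∩ Set.Ico ((n : ℝ)) (n + 1)) := by
        conv_lhs => rw [hcover]
        exact measure_iUnion hpieces (fun n => hmeas.inter measurableSet_Ico)
    _ = ∑' n : ℤ, volume (T n) := by
        refine tsum_congr fun n => ?_
        have hpre : (fun x : ℝ => x + (n : ℝ)) ⁻¹' (S ∩ Set.Ico ((n : ℝ)) (n + 1)) = T n := by
          ext x
          simp only [hTdef, Set.mem_preimage, Set.mem_inter_iff, Set.mem_Ico]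
          constructor
          · rintro ⟨h1, h2, h3⟩; exact ⟨h1, by linarith, by linarith⟩
          · rintro ⟨h1, h2, h3⟩; exact ⟨h1, by linarith, by linarith⟩
        rw [← hpre, measure_preimage_add_right]
    _ = volume (⋃ n, T n) := (measure_iUnion hTdisj hTmeas).symm
    _ ≤ volume (Set.Ico (0 : ℝ) 1) :=
        measure_mono (Set.iUnion_subset fun n => Set.inter_subset_right)
    _ = 1 := by simp [Real.volume_Ico]
end

section
/- Let g(ω) = ∫_0^{arcsin ω} cos^d θ dθ for ω ∈ [0,1] and d ≥ 1. Then the maximum of g(ω₁) + g(ω₂) subject to ω₁, ω₂ ≥ 0 and ω₁ + ω₂ ≤ 1 is attained at ω₁ = ω₂ = 1/2. -/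
open Real

private lemma cospow_ii (n : ℕ) (x y : ℝ) :
    IntervalIntegrable (fun θ => Real.cos θ ^ n) MeasureTheory.volume x y :=
  (Real.continuous_cos.pow n).intervalIntegrable x y

private lemma arcsin_mem (a : ℝ) (ha : 0 ≤ a) :
    0 ≤ Real.arcsin a ∧ Real.arcsin a ≤ Real.pi / 2 :=
  ⟨Real.arcsin_nonneg.2 ha, Real.arcsin_le_pi_div_two a⟩

private lemma aux_upper (e : ℕ) (a b : ℝ) (ha : 0 ≤ a) (hab : a ≤ b) (hb : b ≤ 1) :
    (∫ θ in Real.arcsin a..Real.arcsin b, Real.cos θ ^ (e + 1))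
      ≤ Real.cos (Real.arcsin a) ^ e * (b - a) := by
  have hαβ : Real.arcsin a ≤ Real.arcsin b := Real.monotone_arcsin hab
  have hα0 : 0 ≤ Real.arcsin a := Real.arcsin_nonneg.2 ha
  have hβπ : Real.arcsin b ≤ Real.pi / 2 := Real.arcsin_le_pi_div_two b
  have key : (∫ θ in Real.arcsin a..Real.arcsin b, Real.cos θ ^ (e + 1))
      ≤ ∫ θ in Real.arcsin a..Real.arcsin b,
          Real.cos (Real.arcsin a) ^ e * Real.cos θ := by
    apply intervalIntegral.integral_mono_on hαβ (cospow_ii (e + 1) _ _)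
      ((continuous_const.mul Real.continuous_cos).intervalIntegrable _ _)
    intro θ hθ
    have h0θ : 0 ≤ θ := le_trans hα0 hθ.1
    have hθπ : θ ≤ Real.pi / 2 := le_trans hθ.2 hβπ
    have hc : Real.cos θ ≤ Real.cos (Real.arcsin a) :=
      Real.cos_le_cos_of_nonneg_of_le_pi hα0 (by linarith [Real.pi_pos]) hθ.1
    have hc0 : 0 ≤ Real.cos θ := Real.cos_nonneg_of_mem_Icc ⟨by linarith [Real.pi_pos], hθπ⟩
    calc Real.cos θ ^ (e + 1) = Real.cos θ ^ e * Real.cos θ := pow_succ _ _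
      _ ≤ Real.cos (Real.arcsin a) ^ e * Real.cos θ :=
          mul_le_mul_of_nonneg_right (pow_le_pow_left₀ hc0 hc e) hc0
  calc (∫ θ in Real.arcsin a..Real.arcsin b, Real.cos θ ^ (e + 1))
      ≤ ∫ θ in Real.arcsin a..Real.arcsin b,
          Real.cos (Real.arcsin a) ^ e * Real.cos θ := key
    _ = Real.cos (Real.arcsin a) ^ e * (b - a) := by
        rw [intervalIntegral.integral_const_mul, integral_cos,
          Real.sin_arcsin (by linarith) hb, Real.sin_arcsin (by linarith) (by linarith)]

private lemma aux_lower (e : ℕ) (a b : ℝ) (ha : 0 ≤ a) (hab : a ≤ b) (hb : b ≤ 1) :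
    Real.cos (Real.arcsin b) ^ e * (b - a)
      ≤ ∫ θ in Real.arcsin a..Real.arcsin b, Real.cos θ ^ (e + 1) := by
  have hαβ : Real.arcsin a ≤ Real.arcsin b := Real.monotone_arcsin hab
  have hα0 : 0 ≤ Real.arcsin a := Real.arcsin_nonneg.2 ha
  have hβπ : Real.arcsin b ≤ Real.pi / 2 := Real.arcsin_le_pi_div_two b
  have key : (∫ θ in Real.arcsin a..Real.arcsin b,
          Real.cos (Real.arcsin b) ^ e * Real.cos θ)
      ≤ ∫ θ in Real.arcsin a..Real.arcsin b, Real.cos θ ^ (e + 1) := by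
    apply intervalIntegral.integral_mono_on hαβ
      ((continuous_const.mul Real.continuous_cos).intervalIntegrable _ _)
      (cospow_ii (e + 1) _ _)
    intro θ hθ
    have h0θ : 0 ≤ θ := le_trans hα0 hθ.1
    have hθπ : θ ≤ Real.pi / 2 := le_trans hθ.2 hβπ
    have hc : Real.cos (Real.arcsin b) ≤ Real.cos θ :=
      Real.cos_le_cos_of_nonneg_of_le_pi h0θ (by linarith [Real.pi_pos]) hθ.2
    have hc0 : 0 ≤ Real.cos (Real.arcsin b) :=
      Real.cos_nonneg_of_mem_Icc ⟨by linarith [Real.pi_pos], hβπ⟩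
    have hc0' : 0 ≤ Real.cos θ := le_trans hc0 hc
    calc Real.cos (Real.arcsin b) ^ e * Real.cos θ
        ≤ Real.cos θ ^ e * Real.cos θ :=
          mul_le_mul_of_nonneg_right (pow_le_pow_left₀ hc0 hc e) hc0'
      _ = Real.cos θ ^ (e + 1) := (pow_succ _ _).symm
  calc Real.cos (Real.arcsin b) ^ e * (b - a)
      = ∫ θ in Real.arcsin a..Real.arcsin b,
          Real.cos (Real.arcsin b) ^ e * Real.cos θ := by
        rw [intervalIntegral.integral_const_mul, integral_cos,
          Real.sin_arcsin (by linarith) hb, Real.sin_arcsin (by linarith) (by linarith)]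
    _ ≤ _ := key

private lemma g_mono (d : ℕ) (x y : ℝ) (hx : 0 ≤ x) (hxy : x ≤ y) (hy : y ≤ 1) :
    (∫ θ in (0:ℝ)..Real.arcsin x, Real.cos θ ^ d)
      ≤ ∫ θ in (0:ℝ)..Real.arcsin y, Real.cos θ ^ d := by
  have hαβ : Real.arcsin x ≤ Real.arcsin y := Real.monotone_arcsin hxy
  apply intervalIntegral.integral_mono_interval (le_refl (0:ℝ))
    (Real.arcsin_nonneg.2 hx) hαβ
  · filter_upwards [MeasureTheory.ae_restrict_mem measurableSet_Ioc] with θ hθ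
    have h2 : θ ≤ Real.pi / 2 := le_trans hθ.2 (Real.arcsin_le_pi_div_two y)
    exact pow_nonneg (Real.cos_nonneg_of_mem_Icc ⟨by linarith [Real.pi_pos, hθ.1], h2⟩) d
  · exact cospow_ii d _ _

private lemma main_aux (e : ℕ) (ω₁ ω₂ : ℝ) (h₁ : 0 ≤ ω₁) (hm₁ : ω₁ ≤ 1 / 2)
    (hm₂ : 1 / 2 ≤ ω₂) (hsum : ω₁ + ω₂ ≤ 1) :
    (∫ θ in (0 : ℝ)..Real.arcsin ω₁, Real.cos θ ^ (e + 1)) +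
      (∫ θ in (0 : ℝ)..Real.arcsin ω₂, Real.cos θ ^ (e + 1)) ≤
    2 * ∫ θ in (0 : ℝ)..Real.arcsin (1 / 2), Real.cos θ ^ (e + 1) := by
  have hω₂1 : ω₂ ≤ 1 := by linarith
  have split₂ : (∫ θ in (0:ℝ)..Real.arcsin (1/2), Real.cos θ ^ (e+1))
      + (∫ θ in Real.arcsin (1/2)..Real.arcsin ω₂, Real.cos θ ^ (e+1))
      = ∫ θ in (0:ℝ)..Real.arcsin ω₂, Real.cos θ ^ (e+1) :=
    intervalIntegral.integral_add_adjacent_intervals (cospow_ii _ _ _) (cospow_ii _ _ _)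
  have split₁ : (∫ θ in (0:ℝ)..Real.arcsin ω₁, Real.cos θ ^ (e+1))
      + (∫ θ in Real.arcsin ω₁..Real.arcsin (1/2), Real.cos θ ^ (e+1))
      = ∫ θ in (0:ℝ)..Real.arcsin (1/2), Real.cos θ ^ (e+1) :=
    intervalIntegral.integral_add_adjacent_intervals (cospow_ii _ _ _) (cospow_ii _ _ _)
  have hup := aux_upper e (1/2) ω₂ (by norm_num) hm₂ hω₂1
  have hlo := aux_lower e ω₁ (1/2) h₁ hm₁ (by norm_num)
  have hK : 0 ≤ Real.cos (Real.arcsin (1/2)) ^ e := by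
    apply pow_nonneg
    have h0 : (0:ℝ) ≤ Real.arcsin (1/2) := Real.arcsin_nonneg.2 (by norm_num)
    exact Real.cos_nonneg_of_mem_Icc ⟨by linarith [Real.pi_pos], Real.arcsin_le_pi_div_two _⟩
  have hKle : Real.cos (Real.arcsin (1/2)) ^ e * (ω₂ - 1/2)
      ≤ Real.cos (Real.arcsin (1/2)) ^ e * (1/2 - ω₁) :=
    mul_le_mul_of_nonneg_left (by linarith) hK
  linarith

theorem stmt_12 (d : ℕ) (hd : 1 ≤ d) (ω₁ ω₂ : ℝ) (h₁ : 0 ≤ ω₁) (h₂ : 0 ≤ ω₂)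
    (hsum : ω₁ + ω₂ ≤ 1) :
    (∫ θ in (0 : ℝ)..Real.arcsin ω₁, Real.cos θ ^ d) +
      (∫ θ in (0 : ℝ)..Real.arcsin ω₂, Real.cos θ ^ d) ≤
    2 * ∫ θ in (0 : ℝ)..Real.arcsin (1 / 2), Real.cos θ ^ d := by
  obtain ⟨e, rfl⟩ : ∃ e, d = e + 1 := ⟨d - 1, by omega⟩
  rcases le_total ω₁ (1/2) with hm₁ | hm₁
  · rcases le_total ω₂ (1/2) with hm₂ | hm₂
    · have g₁ := g_mono (e+1) ω₁ (1/2) h₁ hm₁ (by norm_num)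
      have g₂ := g_mono (e+1) ω₂ (1/2) h₂ hm₂ (by norm_num)
      linarith
    · exact main_aux e ω₁ ω₂ h₁ hm₁ hm₂ hsum
  · have hm₂ : ω₂ ≤ 1/2 := by linarith
    have := main_aux e ω₂ ω₁ h₂ hm₂ hm₁ (by linarith)
    linarith
end

section
/- Let a be a point of a truncated ball centered at the origin (so ‖a‖_p < (1−ε)/2 and |a_1| < (1/2 − ε)/2) and b a point of a translated copy with center at (k + 1/2 − ε, 0, …, 0) (so ‖b − c‖_p < (1−ε)/2 and |b_1 − c_1| < (1/2−ε)/2). Then k − 1 < ‖a − b‖_p and ‖a−b‖_p < ((1−ε)^p(d−1) + (k+1−2ε)^p)^{1/p}. In particular, for k large enough, ‖a − b‖_p is not a positive integer. -/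
/-- The ℓ^p "norm" as an explicit expression on ℝ^d. -/
noncomputable def lpNorm (d : ℕ) (p : ℝ) (x : Fin d → ℝ) : ℝ :=
  (∑ i, |x i| ^ p) ^ (1 / p)

/-- The center `(k + 1/2 − ε, 0, …, 0)` of the translated truncated ball. -/
noncomputable def transCenter (d : ℕ) (k : ℕ) (ε : ℝ) : Fin d → ℝ :=
  fun i => if (i : ℕ) = 0 then (k : ℝ) + 1 / 2 - ε else 0

lemma coord_le_lpNorm (d : ℕ) (p : ℝ) (hp : 1 < p) (x : Fin d → ℝ) (i : Fin d) :
    |x i| ≤ lpNorm d p x := by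
  have hp0 : (0:ℝ) < p := lt_trans zero_lt_one hp
  have h1 : |x i| = (|x i| ^ p) ^ (1/p) := by
    rw [one_div, Real.rpow_rpow_inv (abs_nonneg _) hp0.ne']
  rw [lpNorm, h1]
  apply Real.rpow_le_rpow (Real.rpow_nonneg (abs_nonneg _) _)
  · exact Finset.single_le_sum (fun j _ => Real.rpow_nonneg (abs_nonneg _) _)
      (Finset.mem_univ i)
  · positivity

lemma main_bounds (d : ℕ) (hd : 2 ≤ d) (p ε : ℝ) (hp : 1 < p)
    (hε : 0 < ε) (hε2 : ε < 1 / 4) (k : ℕ) (hk : 0 < k) (a b : Fin d → ℝ)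
    (ha : lpNorm d p a < (1 - ε) / 2) (hA : |a ⟨0, by omega⟩| < (1 / 2 - ε) / 2)
    (hb : lpNorm d p (b - transCenter d k ε) < (1 - ε) / 2)
    (hB : |b ⟨0, by omega⟩ - ((k : ℝ) + 1 / 2 - ε)| < (1 / 2 - ε) / 2) :
    (k : ℝ) < lpNorm d p (a - b) ∧
      lpNorm d p (a - b) <
        ((1 - ε) ^ p * (d - 1 : ℝ) + ((k : ℝ) + 1 - 2 * ε) ^ p) ^ (1 / p) := by
  have hp0 : (0:ℝ) < p := lt_trans zero_lt_one hp
  set z : Fin d := ⟨0, by omega⟩ with hz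
  have hk1 : (1:ℝ) ≤ (k:ℝ) := by exact_mod_cast hk
  have hA' := abs_lt.mp hA
  have hB' := abs_lt.mp hB
  constructor
  · -- lower bound
    have h1 : |(a - b) z| ≤ lpNorm d p (a - b) := coord_le_lpNorm d p hp _ z
    have h2 : (a - b) z = a z - b z := by simp
    have h3 : b z - a z ≤ |(a - b) z| := by
      rw [h2, abs_sub_comm]; exact le_abs_self _
    linarith
  · -- upper bound
    set A : ℝ := ((k : ℝ) + 1 - 2 * ε) ^ p with hAdef
    set B : ℝ := (1 - ε) ^ p with hBdef
    have hterm : ∀ i ∈ Finset.univ, |(a - b) i| ^ p <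
        B + (if i = z then A - B else 0) := by
      intro i _
      by_cases hi : i = z
      · subst hi
        rw [if_pos rfl]
        have h2 : (a - b) z = a z - b z := by simp
        have habs : |(a - b) z| < (k : ℝ) + 1 - 2 * ε := by
          rw [h2]
          rw [abs_lt]
          constructor <;> linarith
        have : |(a - b) z| ^ p < A := by
          rw [hAdef]
          exact Real.rpow_lt_rpow (abs_nonneg _) habs hp0
        linarith
      · rw [if_neg hi, add_zero]
        have hiv : (i : ℕ) ≠ 0 := by
          intro h
          exact hi (Fin.ext h)
        have h1 : |a i| ≤ lpNorm d p a := coord_le_lpNorm d p hp a i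
        have h2 : |b i| ≤ lpNorm d p (b - transCenter d k ε) := by
          have he : (b - transCenter d k ε) i = b i := by
            simp [transCenter, hiv]
          have hcl := coord_le_lpNorm d p hp (b - transCenter d k ε) i
          rwa [he] at hcl
        have habs : |(a - b) i| < 1 - ε := by
          have : (a - b) i = a i - b i := by simp
          rw [this]
          calc |a i - b i| ≤ |a i| + |b i| := abs_sub _ _
            _ < 1 - ε := by linarith
        exact Real.rpow_lt_rpow (abs_nonneg _) habs hp0
    have hsum : ∑ i : Fin d, (B + (if i = z then A - B else 0)) =
        (1 - ε) ^ p * (d - 1 : ℝ) + ((k : ℝ) + 1 - 2 * ε) ^ p := by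
      rw [Finset.sum_add_distrib, Finset.sum_const, Finset.sum_ite_eq' Finset.univ z]
      simp only [Finset.mem_univ, if_pos, Finset.card_univ, Fintype.card_fin,
        nsmul_eq_mul]
      rw [hAdef, hBdef]
      have : (2:ℝ) ≤ (d:ℝ) := by exact_mod_cast hd
      ring
    have hlt : ∑ i, |(a - b) i| ^ p <
        (1 - ε) ^ p * (d - 1 : ℝ) + ((k : ℝ) + 1 - 2 * ε) ^ p := by
      rw [← hsum]
      exact Finset.sum_lt_sum_of_nonempty ⟨z, Finset.mem_univ z⟩ hterm
    rw [lpNorm]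
    exact Real.rpow_lt_rpow (Finset.sum_nonneg fun i _ =>
      Real.rpow_nonneg (abs_nonneg _) _) hlt (by positivity)

theorem stmt_16 (d : ℕ) (hd : 2 ≤ d) (p ε : ℝ) (hp : 1 < p)
    (hε : 0 < ε) (hε2 : ε < 1 / 4) :
    (∀ k : ℕ, 0 < k → ∀ a b : Fin d → ℝ,
      lpNorm d p a < (1 - ε) / 2 → |a ⟨0, by omega⟩| < (1 / 2 - ε) / 2 →
      lpNorm d p (b - transCenter d k ε) < (1 - ε) / 2 →
      |b ⟨0, by omega⟩ - ((k : ℝ) + 1 / 2 - ε)| < (1 / 2 - ε) / 2 →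
      (k : ℝ) - 1 < lpNorm d p (a - b) ∧
        lpNorm d p (a - b) <
          ((1 - ε) ^ p * (d - 1 : ℝ) + ((k : ℝ) + 1 - 2 * ε) ^ p) ^ (1 / p)) ∧
    (∃ K : ℕ, ∀ k : ℕ, K ≤ k → ∀ a b : Fin d → ℝ,
      lpNorm d p a < (1 - ε) / 2 → |a ⟨0, by omega⟩| < (1 / 2 - ε) / 2 →
      lpNorm d p (b - transCenter d k ε) < (1 - ε) / 2 →
      |b ⟨0, by omega⟩ - ((k : ℝ) + 1 / 2 - ε)| < (1 / 2 - ε) / 2 →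
      ¬∃ m : ℕ, 0 < m ∧ lpNorm d p (a - b) = m) := by
  have hp0 : (0:ℝ) < p := lt_trans zero_lt_one hp
  constructor
  · intro k hk a b ha hA hb hB
    obtain ⟨h1, h2⟩ := main_bounds d hd p ε hp hε hε2 k hk a b ha hA hb hB
    exact ⟨by linarith, h2⟩
  · -- choose K
    set C : ℝ := (1 - ε) ^ p * (d - 1 : ℝ) with hC
    have hC0 : 0 ≤ C := by
      have : (2:ℝ) ≤ (d:ℝ) := by exact_mod_cast hd
      have h1 : (0:ℝ) ≤ (1 - ε) ^ p := Real.rpow_nonneg (by linarith) _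
      nlinarith
    set M : ℝ := max 1 ((C / (2 * ε)) ^ (p - 1)⁻¹) with hM
    obtain ⟨K0, hK0⟩ := exists_nat_ge M
    refine ⟨K0 + 1, fun k hkK a b ha hA hb hB => ?_⟩
    have hk : 0 < k := by omega
    obtain ⟨h1, h2⟩ := main_bounds d hd p ε hp hε hε2 k hk a b ha hA hb hB
    -- show the upper bound is at most k + 1
    set y : ℝ := (k : ℝ) + 1 - 2 * ε with hy
    have hkK' : (K0 : ℝ) ≤ (k : ℝ) := by exact_mod_cast (by omega : K0 ≤ k)
    have hy0 : 0 < y := by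
      have : (1:ℝ) ≤ (k:ℝ) := by exact_mod_cast hk
      simp only [hy]; linarith
    have hyM : M ≤ y := by simp only [hy]; linarith
    have hM0 : 0 ≤ M := le_trans zero_le_one (le_max_left _ _)
    have hpm1 : (0:ℝ) < p - 1 := by linarith
    -- y ^ (p - 1) * (2 * ε) ≥ C
    have hymono : (C / (2 * ε)) ≤ y ^ (p - 1) := by
      have e1 : ((C / (2 * ε)) ^ (p - 1)⁻¹) ^ (p - 1) = C / (2 * ε) :=
        Real.rpow_inv_rpow (by positivity) hpm1.ne'
      calc C / (2 * ε) = ((C / (2 * ε)) ^ (p - 1)⁻¹) ^ (p - 1) := e1.symm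
        _ ≤ M ^ (p - 1) := Real.rpow_le_rpow (Real.rpow_nonneg (by positivity) _)
            (le_max_right _ _) hpm1.le
        _ ≤ y ^ (p - 1) := Real.rpow_le_rpow hM0 hyM hpm1.le
    have hCy : C ≤ y ^ (p - 1) * (2 * ε) := by
      rw [div_le_iff₀ (by positivity)] at hymono
      linarith
    -- Bernoulli: (k+1)^p ≥ y^p + p * y^(p-1) * 2ε
    have hbern : y ^ p + p * (y ^ (p - 1) * (2 * ε)) ≤ ((k : ℝ) + 1) ^ p := by
      have hs : (0:ℝ) ≤ 2 * ε / y := by positivity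
      have hb1 : 1 + p * (2 * ε / y) ≤ (1 + 2 * ε / y) ^ p :=
        one_add_mul_self_le_rpow_one_add (by linarith) hp.le
      have key : ((k : ℝ) + 1) ^ p = y ^ p * (1 + 2 * ε / y) ^ p := by
        rw [← Real.mul_rpow hy0.le (by linarith)]
        have hyy : y * (1 + 2 * ε / y) = (k : ℝ) + 1 := by
          field_simp
          linarith
        rw [hyy]
      rw [key]
      have hyp : (0:ℝ) < y ^ p := Real.rpow_pos_of_pos hy0 _
      have hsplit : y ^ p * (1 + p * (2 * ε / y)) =
          y ^ p + p * (y ^ (p - 1) * (2 * ε)) := by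
        have : y ^ p / y = y ^ (p - 1) := by
          rw [Real.rpow_sub hy0, Real.rpow_one]
        field_simp
        rw [← this]
        field_simp
      calc y ^ p + p * (y ^ (p - 1) * (2 * ε)) = y ^ p * (1 + p * (2 * ε / y)) :=
            hsplit.symm
        _ ≤ y ^ p * (1 + 2 * ε / y) ^ p := by
            apply mul_le_mul_of_nonneg_left hb1 hyp.le
    have hub : C + y ^ p ≤ ((k : ℝ) + 1) ^ p := by
      have hp1 : y ^ (p - 1) * (2 * ε) ≤ p * (y ^ (p - 1) * (2 * ε)) := by
        have : (0:ℝ) ≤ y ^ (p - 1) * (2 * ε) := by positivity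
        nlinarith
      linarith
    have hUk : (C + y ^ p) ^ (1 / p) ≤ (k : ℝ) + 1 := by
      have hyp0 : (0:ℝ) ≤ y ^ p := Real.rpow_nonneg hy0.le _
      have := Real.rpow_le_rpow (by linarith : (0:ℝ) ≤ C + y ^ p) hub
        (by positivity : (0:ℝ) ≤ 1 / p)
      calc (C + y ^ p) ^ (1 / p) ≤ (((k : ℝ) + 1) ^ p) ^ (1 / p) := this
        _ = (k : ℝ) + 1 := by
            rw [one_div, Real.rpow_rpow_inv (by positivity) hp0.ne']
    rintro ⟨m, hm, hmeq⟩
    have hlt1 : (k : ℝ) < (m : ℝ) := by rw [← hmeq]; exact h1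
    have hlt2 : (m : ℝ) < (k : ℝ) + 1 := by
      rw [← hmeq]
      calc lpNorm d p (a - b) < (C + y ^ p) ^ (1 / p) := h2
        _ ≤ (k : ℝ) + 1 := hUk
    have : k < m := by exact_mod_cast hlt1
    have : m < k + 1 := by exact_mod_cast hlt2
    omega
end

section
/- Let p be an odd prime and ζ_j = exp(πij/p) the 2p-th roots of unity. Set α_j = (ζ_j − ζ_{2p−j})/i = 2 sin(jπ/p) for 1 ≤ j ≤ (p−1)/2. Then the numbers α_1, …, α_{(p−1)/2} are irrational and linearly independent over ℚ. -/
open Finset in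
theorem li_sub_aux {K M ι κ : Type*} [Field K] [AddCommGroup M] [Module K M]
    [Fintype ι] [Fintype κ] [DecidableEq ι] [DecidableEq κ] {w : ι → M}
    (hw : LinearIndependent K w)
    {σ τ : κ → ι} (hσ : Function.Injective σ) (hτ : Function.Injective τ)
    (hd : ∀ a b, σ a ≠ τ b) :
    LinearIndependent K (fun j => w (σ j) - w (τ j)) := by
  rw [Fintype.linearIndependent_iff] at hw ⊢
  intro q hq j
  set g : ι → K := fun i => (∑ a, if σ a = i then q a else 0)
    - (∑ a, if τ a = i then q a else 0) with hg
  have hgz : ∀ i, g i = 0 := by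
    apply hw
    have : ∑ i, g i • w i = ∑ a, q a • (w (σ a) - w (τ a)) := by
      simp only [hg, sub_smul, Finset.sum_sub_distrib, Finset.sum_smul, ite_smul,
        zero_smul, smul_sub]
      rw [Finset.sum_comm, Finset.sum_comm (γ := ι)]
      simp
    rw [this, hq]
  have h1 := hgz (σ j)
  simp only [hg] at h1
  have e1 : (∑ a, if σ a = σ j then q a else 0) = q j := by
    rw [Finset.sum_eq_single j] <;> simp +contextual [hσ.eq_iff]
  have e2 : (∑ a, if τ a = σ j then q a else 0) = 0 :=
    Finset.sum_eq_zero (fun a _ => by simp [(hd j a).symm])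
  rw [e1, e2] at h1
  simpa using h1


theorem aux_cast (p t : ℕ) (hp : p.Prime) (ht : p = 2*t+1) (a : ℕ) :
    ((a*(t+1)) % p : ZMod p) = (a : ZMod p) * ((t+1 : ℕ) : ZMod p) := by
  rw [ZMod.natCast_mod]; push_cast; ring

theorem aux_two (p t : ℕ) (hp : p.Prime) (ht : p = 2*t+1) :
    ((2*(t+1) : ℕ) : ZMod p) = 1 := by
  have : (2*(t+1) : ℕ) = p + 1 := by omega
  rw [this]; push_cast [ZMod.natCast_self]; ring

theorem aux_inj (p t : ℕ) (hp : p.Prime) (ht : p = 2*t+1) {a b : ℕ}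
    (ha : a ≤ t) (hb : b ≤ t) (h : (a : ZMod p) = (b : ZMod p)) : a = b := by
  have := congrArg ZMod.val h
  rwa [ZMod.val_cast_of_lt (by omega), ZMod.val_cast_of_lt (by omega)] at this

theorem aux1 (p t : ℕ) (hp : p.Prime) (ht : p = 2*t+1) {a b : ℕ}
    (ha : a ≤ t) (hb : b ≤ t)
    (h : (a*(t+1)) % p = (b*(t+1)) % p) : a = b := by
  have h2 : ((a*(t+1)) % p : ZMod p) = ((b*(t+1)) % p : ZMod p) := by rw [h]
  rw [aux_cast p t hp ht, aux_cast p t hp ht] at h2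
  refine aux_inj p t hp ht ha hb ?_
  have h3 := congrArg (· * (((2:ℕ)) : ZMod p)) h2
  have h4 : ∀ x : ℕ, (x : ZMod p) * ((t+1:ℕ) : ZMod p) * ((2:ℕ) : ZMod p) = x := by
    intro x
    rw [mul_assoc, show ((t+1:ℕ):ZMod p) * ((2:ℕ):ZMod p) = ((2*(t+1):ℕ):ZMod p) by
      push_cast; ring, aux_two p t hp ht, mul_one]
  rwa [h4, h4] at h3

theorem aux3 (p t : ℕ) (hp : p.Prime) (ht : p = 2*t+1) (htpos : 1 ≤ t) {a : ℕ}
    (ha : 1 ≤ a) (ha' : a ≤ t) : (a*(t+1)) % p ≠ 0 := by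
  intro h
  have : p ∣ a * (t+1) := Nat.dvd_of_mod_eq_zero h
  rcases (Nat.Prime.dvd_mul hp).mp this with h' | h'
  · exact absurd (Nat.le_of_dvd (by omega) h') (by omega)
  · exact absurd (Nat.le_of_dvd (by omega) h') (by omega)

theorem aux2 (p t : ℕ) (hp : p.Prime) (ht : p = 2*t+1) (htpos : 1 ≤ t) {a b : ℕ}
    (ha : 1 ≤ a) (ha' : a ≤ t) (hb : 1 ≤ b) (hb' : b ≤ t) :
    (a*(t+1)) % p + (b*(t+1)) % p ≠ p := by
  intro h
  have h2 : (((a*(t+1)) % p + (b*(t+1)) % p : ℕ) : ZMod p) = 0 := by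
    rw [h, ZMod.natCast_self]
  push_cast at h2
  rw [aux_cast p t hp ht, aux_cast p t hp ht] at h2
  have h3 : ((a : ZMod p) + b) * ((t+1:ℕ) : ZMod p) = 0 := by
    rw [add_mul]; exact h2
  have h4 : ((a + b : ℕ) : ZMod p) = 0 := by
    have h5 := congrArg (· * (((2:ℕ)) : ZMod p)) h3
    simp only [zero_mul] at h5
    calc ((a + b : ℕ) : ZMod p)
        = ((a:ZMod p) + b) * ((t+1:ℕ):ZMod p) * ((2:ℕ):ZMod p) := by
          rw [mul_assoc, show ((t+1:ℕ):ZMod p) * ((2:ℕ):ZMod p) = ((2*(t+1):ℕ):ZMod p) by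
            push_cast; ring, aux_two p t hp ht, mul_one]; push_cast; ring
    _ = 0 := h5
  rw [ZMod.natCast_eq_zero_iff] at h4
  have := Nat.le_of_dvd (by omega) h4
  omega


open Complex Real in
theorem exp_eq (p t J : ℕ) (hp : 0 < p) (ht : p = 2*t+1) :
    Complex.exp ((J : ℂ) * Real.pi * Complex.I / p)
      = (-1)^J * Complex.exp (2 * Real.pi * Complex.I / p) ^ (J*(t+1)) := by
  have hp0 : (p:ℂ) ≠ 0 := Nat.cast_ne_zero.mpr hp.ne'
  have hpc : (p:ℂ) = 2*t+1 := by exact_mod_cast congrArg (Nat.cast : ℕ → ℂ) ht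
  rw [show ((-1:ℂ))^J = Complex.exp (Real.pi * Complex.I) ^ J by rw [Complex.exp_pi_mul_I],
    ← Complex.exp_nat_mul, ← Complex.exp_nat_mul, ← Complex.exp_add]
  rw [show (J:ℂ) * (Real.pi * Complex.I) + (J*(t+1):ℕ) * (2 * Real.pi * Complex.I / p)
      = (J:ℂ) * Real.pi * Complex.I / p + J * (2 * Real.pi * Complex.I) by
    push_cast; field_simp; rw [hpc]; ring]
  rw [Complex.exp_add, show ((J:ℂ)) * (2 * Real.pi * Complex.I)
      = (J:ℕ) * (2 * Real.pi * Complex.I) by push_cast; ring,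
    Complex.exp_nat_mul, Complex.exp_two_pi_mul_I, one_pow, mul_one]


theorem li_omega (p : ℕ) (hp : p.Prime) :
    LinearIndependent ℚ (fun k : Fin (p - 1) =>
      Complex.exp (2 * Real.pi * Complex.I / p) ^ ((k : ℕ) + 1)) := by
  set ω : ℂ := Complex.exp (2 * Real.pi * Complex.I / p) with hωdef
  have hprim : IsPrimitiveRoot ω p := Complex.isPrimitiveRoot_exp p hp.ne_zero
  have hdeg : (minpoly ℚ ω).natDegree = p - 1 := by
    rw [← Polynomial.cyclotomic_eq_minpoly_rat hprim hp.pos,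
      Polynomial.natDegree_cyclotomic, Nat.totient_prime hp]
  have h := linearIndependent_pow (K := ℚ) (S := ℂ) ω
  rw [hdeg] at h
  have hω0 : ω ≠ 0 := hprim.ne_zero hp.ne_zero
  have h2 := h.map' (LinearMap.mulLeft ℚ ω)
    (LinearMap.ker_eq_bot.mpr (mul_right_injective₀ hω0))
  convert h2 using 2 with k
  simp [pow_succ, mul_comm]
  all_goals rfl


open Real in
theorem irr_aux (p t j : ℕ) (hp : p.Prime) (ht : p = 2*t+1) (htpos : 1 ≤ t)
    (hj : 1 ≤ j) (hj' : j ≤ t) : Irrational (2 * Real.sin (j * Real.pi / p)) := by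
  have hp0 : (0:ℝ) < p := by
    have := hp.pos; exact_mod_cast this
  set θ : ℝ := j * Real.pi / p with hθ
  have hθpos : 0 < θ := by
    apply div_pos (mul_pos _ Real.pi_pos) hp0
    exact_mod_cast hj
  have hθlt : θ < Real.pi / 2 := by
    rw [hθ, div_lt_div_iff₀ hp0 two_pos]
    have h2j : (2*j : ℝ) < p := by
      have : 2*j < p := by omega
      exact_mod_cast this
    calc (j:ℝ) * Real.pi * 2 = (2*j : ℝ) * Real.pi := by ring
    _ < p * Real.pi := by exact mul_lt_mul_of_pos_right h2j Real.pi_pos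
    _ = Real.pi * p := by ring
  have hmem : θ ∈ Set.Icc (-(Real.pi/2)) (Real.pi/2) :=
    ⟨by linarith, hθlt.le⟩
  have hsinpos : 0 < Real.sin θ := Real.sin_pos_of_pos_of_lt_pi hθpos
    (by linarith [Real.pi_pos])
  have hsinlt : Real.sin θ < 1 := by
    have := Real.strictMonoOn_sin hmem (Set.mem_Icc.mpr ⟨by linarith [Real.pi_pos], le_refl _⟩) hθlt
    rwa [Real.sin_pi_div_two] at this
  have hne : Real.sin θ ≠ 1/2 := by
    intro h
    have h6 : θ = Real.pi / 6 := by
      apply Real.injOn_sin hmem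
      · constructor
        · linarith [Real.pi_pos]
        · linarith [Real.pi_pos]
      · rw [Real.sin_pi_div_six, h]
    rw [hθ] at h6
    have hpi : Real.pi ≠ 0 := Real.pi_ne_zero
    have : (6 * j : ℝ) = p := by
      field_simp at h6
      nlinarith [Real.pi_pos]
    have : 6 * j = p := by exact_mod_cast this
    omega
  -- integrality
  set μ : ℂ := Complex.exp (Real.pi * Complex.I / (2*p)) with hμ
  have hμ4p : μ ^ (4*p) = 1 := by
    rw [hμ, ← Complex.exp_nat_mul,
      show ((4*p:ℕ):ℂ) * (Real.pi * Complex.I / (2*p)) = 2 * Real.pi * Complex.I by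
        have hpc : ((p:ℕ):ℂ) ≠ 0 := Nat.cast_ne_zero.mpr hp.ne_zero
        push_cast
        field_simp
        ring,
      Complex.exp_two_pi_mul_I]
  have hμint : IsIntegral ℤ μ := by
    refine ⟨Polynomial.X^(4*p) - Polynomial.C 1, Polynomial.monic_X_pow_sub_C 1 (by have := hp.pos; omega), ?_⟩
    simp [hμ4p]
  have hpc : ((p:ℕ):ℂ) ≠ 0 := Nat.cast_ne_zero.mpr hp.ne_zero
  have hμI : μ ^ p = Complex.I := by
    rw [hμ, ← Complex.exp_nat_mul,
      show ((p:ℕ):ℂ) * (Real.pi * Complex.I / (2*p)) = (Real.pi/2) * Complex.I by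
        field_simp]
    rw [Complex.exp_mul_I]
    push_cast
    rw [Complex.cos_pi_div_two, Complex.sin_pi_div_two, one_mul, zero_add]
  have h2jp : 2*j ≤ p := by omega
  have e1 : Complex.exp ((θ:ℂ) * Complex.I) = μ^(2*j) := by
    rw [hμ, ← Complex.exp_nat_mul, hθ]
    congr 1
    push_cast
    field_simp
  have e2 : μ^(p-2*j) * μ^(2*j) = Complex.I := by
    rw [← pow_add, Nat.sub_add_cancel h2jp, hμI]
  have hμne : μ ≠ 0 := Complex.exp_ne_zero _
  have e3 : Complex.exp (-((θ:ℂ) * Complex.I)) * Complex.I = μ^(p-2*j) := by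
    rw [Complex.exp_neg, e1, ← e2]
    field_simp
  have e4 : μ^(3*p + 2*j) = -(μ^(2*j) * Complex.I) := by
    rw [pow_add, show 3*p = p*3 by ring, pow_mul, hμI]
    rw [show Complex.I^3 = Complex.I^2 * Complex.I by ring, Complex.I_sq]
    ring
  have hxc : ((2 * Real.sin θ : ℝ) : ℂ) = μ^(p-2*j) + μ^(3*p+2*j) := by
    rw [Complex.ofReal_mul, Complex.ofReal_sin, Complex.sin, e4,
      show -(θ:ℂ) * Complex.I = -((θ:ℂ) * Complex.I) by ring, ← e3, ← e1]
    push_cast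
    ring
  have hint : IsIntegral ℤ (2 * Real.sin θ : ℝ) := by
    apply IsIntegral.tower_bot (A := ℝ) (B := ℂ) Complex.ofReal_injective
    rw [show algebraMap ℝ ℂ (2 * Real.sin θ : ℝ) = ((2 * Real.sin θ : ℝ) : ℂ) from rfl, hxc]
    exact (hμint.pow _).add (hμint.pow _)
  intro hrat
  obtain ⟨q, hq⟩ := hrat
  rw [← hq] at hint
  have hqint : IsIntegral ℤ q := by
    apply IsIntegral.tower_bot (A := ℚ) (B := ℝ) (algebraMap ℚ ℝ).injective
    rwa [eq_ratCast (algebraMap ℚ ℝ) q]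
  obtain ⟨n, hn⟩ := IsIntegrallyClosed.isIntegral_iff.mp hqint
  rw [eq_intCast] at hn
  have hx1 : (0:ℝ) < (q:ℝ) := by rw [hq]; linarith
  have hx2 : (q:ℝ) < 2 := by rw [hq]; linarith
  have hx3 : (q:ℝ) ≠ 1 := by
    rw [hq]; intro h; exact hne (by linarith)
  rw [← hn] at hx1 hx2 hx3
  push_cast at hx1 hx2 hx3
  have hn1 : n = 1 := by
    have : (0:ℤ) < n := by exact_mod_cast hx1
    have : n < 2 := by exact_mod_cast hx2
    omega
  rw [hn1] at hx3
  norm_num at hx3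


theorem stmt_17 (p : ℕ) (hp : p.Prime) (hodd : Odd p) :
    (∀ j : ℕ, 1 ≤ j → j ≤ (p - 1) / 2 → Irrational (2 * Real.sin (j * Real.pi / p))) ∧
    LinearIndependent ℚ (fun j : Fin ((p - 1) / 2) =>
      (2 * Real.sin (((j : ℕ) + 1) * Real.pi / p) : ℝ)) := by
  obtain ⟨t, ht⟩ := hodd
  have ht : p = 2*t+1 := by omega
  have htpos : 1 ≤ t := by have := hp.two_le; omega
  have hm : (p - 1) / 2 = t := by omega
  constructor
  · intro j hj hj'
    rw [hm] at hj'
    exact irr_aux p t j hp ht htpos hj hj'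
  rw [hm]
  set ω : ℂ := Complex.exp (2 * Real.pi * Complex.I / p) with hωdef
  have hprim : IsPrimitiveRoot ω p := Complex.isPrimitiveRoot_exp p hp.ne_zero
  have hωp : ω ^ p = 1 := hprim.pow_eq_one
  have hmod : ∀ n, ω ^ n = ω ^ (n % p) := by
    intro n
    conv_lhs => rw [← Nat.div_add_mod n p]
    rw [pow_add, pow_mul, hωp, one_pow, one_mul]
  -- exponents
  set e : Fin t → ℕ := fun j => (((j:ℕ)+1) * (t+1)) % p with he
  have he_pos : ∀ j, 1 ≤ e j := fun j =>
    Nat.one_le_iff_ne_zero.mpr (aux3 p t hp ht htpos (by omega) (by have := j.2; omega))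
  have he_lt : ∀ j, e j < p := fun j => Nat.mod_lt _ hp.pos
  have hsub : p - 1 = 2 * t := by omega
  set σ : Fin t → Fin (p-1) := fun j => ⟨e j - 1, by have := he_pos j; have := he_lt j; omega⟩
  set τ : Fin t → Fin (p-1) := fun j => ⟨p - e j - 1, by have := he_pos j; have := he_lt j; omega⟩
  have hσinj : Function.Injective σ := by
    intro a b hab
    have h1 : e a = e b := by
      have := congrArg Fin.val hab
      simp only [σ] at this
      have := he_pos a; have := he_pos b
      omega
    have := aux1 p t hp ht (a := (a:ℕ)+1) (b := (b:ℕ)+1)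
      (by have := a.2; omega) (by have := b.2; omega) h1
    exact Fin.ext (by omega)
  have hd : ∀ a b, σ a ≠ τ b := by
    intro a b hab
    have h1 := congrArg Fin.val hab
    simp only [σ, τ] at h1
    have h2 : e a + e b = p := by
      have := he_pos a; have := he_pos b; have := he_lt a; have := he_lt b; omega
    exact aux2 p t hp ht htpos (a := (a:ℕ)+1) (b := (b:ℕ)+1)
      (by omega) (by have := a.2; omega) (by omega) (by have := b.2; omega) h2
  have hτinj : Function.Injective τ := by
    intro a b hab
    have h1 : e a = e b := by
      have := congrArg Fin.val hab
      simp only [τ] at this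
      have := he_pos a; have := he_pos b; have := he_lt a; have := he_lt b
      omega
    have := aux1 p t hp ht (a := (a:ℕ)+1) (b := (b:ℕ)+1)
      (by have := a.2; omega) (by have := b.2; omega) h1
    exact Fin.ext (by omega)
  have li1 := li_omega p hp
  have li2 := li_sub_aux li1 hσinj hτinj hd
  have li3 := li2.map' (LinearMap.mulLeft ℚ Complex.I)
    (LinearMap.ker_eq_bot.mpr (mul_right_injective₀ Complex.I_ne_zero))
  have li4 := li3.units_smul (fun j => (-1)^(j:ℕ))
  apply LinearIndependent.of_comp ((Algebra.linearMap ℝ ℂ).restrictScalars ℚ)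
  convert li4 using 1
  funext j
  simp only [Function.comp, LinearMap.coe_restrictScalars, Algebra.linearMap_apply,
    Complex.coe_algebraMap, LinearMap.mulLeft_apply, Pi.smul_apply', Units.smul_def]
  have hv1 : ((σ j : ℕ)) + 1 = e j := by
    simp only [σ]; have := he_pos j; omega
  have hv2 : ((τ j : ℕ)) + 1 = p - e j := by
    simp only [τ]; have := he_pos j; have := he_lt j; omega
  rw [hv1, hv2]
  set J : ℕ := (j:ℕ)+1 with hJ
  have h1 : Complex.exp ((J:ℂ) * Real.pi / p * Complex.I) = (-1)^J * ω ^ (e j) := by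
    rw [show (J:ℂ) * Real.pi / p * Complex.I = (J:ℂ) * Real.pi * Complex.I / p by ring,
      exp_eq p t J hp.pos ht, ← hωdef, hmod (J*(t+1))]
  have hinv1 : Complex.exp (-((J:ℂ) * Real.pi / p * Complex.I))
      * Complex.exp ((J:ℂ) * Real.pi / p * Complex.I) = 1 := by
    rw [← Complex.exp_add]; simp
  have hinv2 : ((-1:ℂ)^J * ω ^ (p - e j)) * ((-1)^J * ω ^ (e j)) = 1 := by
    rw [show ((-1:ℂ)^J * ω ^ (p - e j)) * ((-1)^J * ω ^ (e j))
        = ((-1)^J*(-1)^J) * (ω ^ (p - e j) * ω ^ (e j)) by ring,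
      ← pow_add, ← pow_add, Nat.sub_add_cancel (he_lt j).le, hωp,
      Even.neg_one_pow ⟨J, rfl⟩, one_mul]
  have h2 : Complex.exp (-((J:ℂ) * Real.pi / p * Complex.I)) = (-1)^J * ω ^ (p - e j) := by
    rw [Complex.exp_neg]
    rw [← h1] at hinv2
    exact inv_eq_of_mul_eq_one_left hinv2
  have hz : (((((j:ℕ)+1) * Real.pi / p : ℝ)) : ℂ) = (J:ℂ) * Real.pi / p := by
    rw [hJ]; push_cast; ring
  rw [Complex.ofReal_mul, Complex.ofReal_sin, hz, Complex.sin,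
    show -((J:ℂ) * Real.pi / p) * Complex.I = -((J:ℂ) * Real.pi / p * Complex.I) by ring,
    h1, h2]
  have hsign : ((-1:ℂ))^J = -(-1:ℂ)^(j:ℕ) := by rw [hJ, pow_succ]; ring
  have hsmul : (((-1:ℚˣ)^(j:ℕ) : ℚˣ) : ℚ) • (Complex.I * (ω ^ (e j) - ω ^ (p - e j)))
      = ((-1:ℂ)^(j:ℕ)) * (Complex.I * (ω ^ (e j) - ω ^ (p - e j))) := by
    rw [Rat.smul_def]; push_cast; ring
  rw [hsmul, hsign]
  push_cast
  ring
  all_goals rfl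
end

section
/- If Q is a finite set of points in Euclidean space ℝ^d such that all pairwise distances are odd integers, then |Q| ≤ d + 2. -/
open Matrix Finset

lemma aux_det_ne_zero (k : ℕ) :
    (Matrix.of fun i j : Fin (k + 1) =>
      if (i : ℕ) + 1 = (j : ℕ) then (0 : ZMod 2) else 1).det ≠ 0 := by
  set M : Matrix (Fin (k + 1)) (Fin (k + 1)) (ZMod 2) :=
    Matrix.of fun i j : Fin (k + 1) => if (i : ℕ) + 1 = (j : ℕ) then (0 : ZMod 2) else 1 with hM
  intro hdet
  obtain ⟨v, hv, hmv⟩ := (Matrix.exists_mulVec_eq_zero_iff).2 hdet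
  apply hv
  -- the sum of all entries of v
  set S : ZMod 2 := ∑ j, v j with hS
  have hrow : ∀ i : Fin (k + 1), ∑ j, M i j * v j = 0 := by
    intro i
    have := congrFun hmv i
    simpa [Matrix.mulVec, dotProduct] using this
  -- last row gives S = 0
  have hSzero : S = 0 := by
    have := hrow (Fin.last k)
    have hconv : ∑ j, M (Fin.last k) j * v j = S := by
      apply Finset.sum_congr rfl
      intro j _
      have hne : ¬ ((Fin.last k : ℕ) + 1 = (j : ℕ)) := by
        have := j.isLt; simp only [Fin.val_last]; omega
      rw [hM]
      simp only [Matrix.of_apply]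
      rw [if_neg hne, one_mul]
    rw [hconv] at this
    exact this
  -- rows i with i < k give v ⟨i+1⟩ = 0
  have hv' : ∀ j : Fin (k + 1), (j : ℕ) ≠ 0 → v j = 0 := by
    intro j hj
    have hjlt := j.isLt
    set i : Fin (k + 1) := ⟨(j : ℕ) - 1, by omega⟩ with hi
    have hij : (i : ℕ) + 1 = (j : ℕ) := by simp [hi]; omega
    have := hrow i
    have hconv : ∑ j', M i j' * v j' = S - v j := by
      have : ∀ j' : Fin (k + 1), M i j' * v j' = v j' - (if j = j' then v j' else 0) := by
        intro j'
        by_cases hc : j = j'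
        · subst hc; simp [hM, hij]
        · have : ¬ ((i : ℕ) + 1 = (j' : ℕ)) := by
            rw [hij]; intro hcc; exact hc (Fin.ext hcc)
          simp [hM, this, hc]
      rw [Finset.sum_congr rfl fun j' _ => this j', Finset.sum_sub_distrib,
        Finset.sum_ite_eq]
      simp [hS]
    rw [hconv, hSzero] at this
    have : v j = -0 := by linear_combination -this
    simpa using this
  -- then S = v 0
  have h0 : v ⟨0, by omega⟩ = 0 := by
    have : S = v ⟨0, by omega⟩ := by
      rw [hS]
      rw [Finset.sum_eq_single ⟨0, by omega⟩]
      · intro j _ hj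
        apply hv'
        intro hj0
        exact hj (Fin.ext (by simpa using hj0))
      · simp
    rw [← this, hSzero]
  funext j
  by_cases hj : (j : ℕ) = 0
  · have : j = ⟨0, by omega⟩ := Fin.ext (by simpa using hj)
    rw [this, h0]; rfl
  · rw [hv' j hj]; rfl

lemma odd_natCast_zmod_two {n : ℕ} (hn : Odd n) : (n : ZMod 2) = 1 := by
  obtain ⟨m, rfl⟩ := hn
  push_cast
  have h2 : (2 : ZMod 2) = 0 := rfl
  rw [h2]
  ring

theorem stmt_19 (d : ℕ) (Q : Finset (EuclideanSpace ℝ (Fin d)))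
    (h : ∀ q ∈ Q, ∀ q' ∈ Q, q ≠ q' → ∃ m : ℕ, Odd m ∧ dist q q' = m) :
    Q.card ≤ d + 2 := by
  by_contra hc
  push_neg at hc
  have hcard : d + 3 ≤ Q.card := hc
  obtain ⟨g, hginj, hgmem⟩ :
      ∃ g : Fin (d + 3) → EuclideanSpace ℝ (Fin d),
        Function.Injective g ∧ ∀ i, g i ∈ Q := by
    refine ⟨fun i => (Q.equivFin.symm (Fin.castLE hcard i) : EuclideanSpace ℝ (Fin d)), ?_, ?_⟩
    · intro i j hij
      have := Subtype.coe_injective hij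
      have := Q.equivFin.symm.injective this
      exact Fin.castLE_injective hcard this
    · intro i
      exact (Q.equivFin.symm (Fin.castLE hcard i)).2
  -- base point and the other points
  have hpmem : g (Fin.last (d + 2)) ∈ Q := hgmem _
  have hqmem : ∀ i : Fin (d + 2), g i.castSucc ∈ Q := fun i => hgmem _
  have hqp_ne : ∀ i : Fin (d + 2), g i.castSucc ≠ g (Fin.last (d + 2)) := by
    intro i hi
    have := hginj hi
    exact (Fin.castSucc_lt_last i).ne this
  have hqq_ne : ∀ i j : Fin (d + 2), i ≠ j → g i.castSucc ≠ g j.castSucc := by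
    intro i j hij hgij
    exact hij (Fin.castSucc_injective _ (hginj hgij))
  -- distances to the base point
  have hqp : ∀ i : Fin (d + 2), ∃ m : ℕ, Odd m ∧
      dist (g i.castSucc) (g (Fin.last (d + 2))) = m := fun i =>
    h _ (hqmem i) _ hpmem (hqp_ne i)
  choose a haodd hadist using hqp
  -- pairwise distances
  have hqq : ∀ i j : Fin (d + 2), ∃ m : ℕ,
      (i ≠ j → Odd m ∧ dist (g i.castSucc) (g j.castSucc) = m) ∧ (i = j → m = 0) := by
    intro i j
    by_cases hij : i = j
    · exact ⟨0, fun hne => absurd hij hne, fun _ => rfl⟩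
    · obtain ⟨m, hm1, hm2⟩ := h _ (hqmem i) _ (hqmem j) (hqq_ne i j hij)
      exact ⟨m, fun _ => ⟨hm1, hm2⟩, fun heq => absurd heq hij⟩
  choose b hb1 hb2 using hqq
  -- key identity
  have hnormqp : ∀ i : Fin (d + 2), ‖g i.castSucc - g (Fin.last (d + 2))‖ = (a i : ℝ) := by
    intro i; rw [← dist_eq_norm, hadist i]
  have hnormqq : ∀ i j : Fin (d + 2), ‖g i.castSucc - g j.castSucc‖ = (b i j : ℝ) := by
    intro i j
    by_cases hij : i = j
    · subst hij
      rw [hb2 i i rfl, sub_self]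
      simp
    · rw [← dist_eq_norm, (hb1 i j hij).2]
  have hkey : ∀ i j : Fin (d + 2),
      2 * (inner ℝ (g i.castSucc - g (Fin.last (d + 2))) (g j.castSucc - g (Fin.last (d + 2))) : ℝ)
        = (a i : ℝ) ^ 2 + (a j : ℝ) ^ 2 - (b i j : ℝ) ^ 2 := by
    intro i j
    have hns := norm_sub_sq_real (g i.castSucc - g (Fin.last (d + 2)))
      (g j.castSucc - g (Fin.last (d + 2)))
    rw [sub_sub_sub_cancel_right, hnormqq i j, hnormqp i, hnormqp j] at hns
    linarith
  -- the integer matrix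
  set B : Matrix (Fin (d + 1)) (Fin (d + 1)) ℤ := Matrix.of fun i j =>
    ((a i.succ : ℤ)) ^ 2 + ((a j.castSucc : ℤ)) ^ 2 - ((b i.succ j.castSucc : ℤ)) ^ 2 with hB
  -- its determinant is odd, hence nonzero
  have hBdet : B.det ≠ 0 := by
    intro h0
    have hBmod : B.map (Int.castRingHom (ZMod 2)) = Matrix.of
        (fun i j : Fin (d + 1) => if (i : ℕ) + 1 = (j : ℕ) then (0 : ZMod 2) else 1) := by
      ext i j
      simp only [Matrix.map_apply, hB, Matrix.of_apply]
      by_cases hij : (i : ℕ) + 1 = (j : ℕ)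
      · have heq : i.succ = j.castSucc := by
          apply Fin.ext
          simpa using hij
        rw [if_pos hij, heq, hb2 _ _ rfl]
        simp only [Nat.cast_zero, ne_eq, map_sub, map_add, map_pow, map_natCast, map_zero,
          zero_pow, sub_zero]
        rw [odd_natCast_zmod_two (haodd j.castSucc)]
        have h2 : (2 : ZMod 2) = 0 := rfl
        ring_nf
        rw [h2]
      · have hne : i.succ ≠ j.castSucc := by
          intro hcc
          apply hij
          simpa using congrArg Fin.val hcc
        rw [if_neg hij]
        simp only [map_sub, map_add, map_pow, map_natCast]
        rw [odd_natCast_zmod_two (haodd i.succ), odd_natCast_zmod_two (haodd j.castSucc),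
          odd_natCast_zmod_two ((hb1 _ _ hne).1)]
        have h2 : (2 : ZMod 2) = 0 := rfl
        ring_nf
    have h1 : (B.map (Int.castRingHom (ZMod 2))).det = ((B.det : ZMod 2)) := by
      rw [← RingHom.mapMatrix_apply, ← RingHom.map_det]
      rfl
    rw [hBmod] at h1
    exact aux_det_ne_zero d (by rw [h1, h0]; simp)
  -- linear independence of d+1 vectors in a d-dimensional space
  have li : LinearIndependent ℝ
      (fun j : Fin (d + 1) => g j.castSucc.castSucc - g (Fin.last (d + 2))) := by
    rw [Fintype.linearIndependent_iff]
    intro c hc0 j0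
    have hrel : (B.map (Int.cast : ℤ → ℝ)).mulVec c = 0 := by
      funext i
      have hz : (inner ℝ (g i.succ.castSucc - g (Fin.last (d + 2)))
          (∑ j, c j • (g j.castSucc.castSucc - g (Fin.last (d + 2)))) : ℝ) = 0 := by
        rw [hc0, inner_zero_right]
      rw [inner_sum] at hz
      simp_rw [real_inner_smul_right] at hz
      show ∑ j, (B i j : ℝ) * c j = 0
      have : ∀ j : Fin (d + 1), (B i j : ℝ) * c j = 2 * (c j *
          (inner ℝ (g i.succ.castSucc - g (Fin.last (d + 2)))
            (g j.castSucc.castSucc - g (Fin.last (d + 2))) : ℝ)) := by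
        intro j
        have hBij : (B i j : ℝ) = 2 * (inner ℝ (g i.succ.castSucc - g (Fin.last (d + 2)))
            (g j.castSucc.castSucc - g (Fin.last (d + 2))) : ℝ) := by
          rw [hB]
          simp only [Matrix.of_apply]
          rw [hkey i.succ j.castSucc]
          push_cast
          ring
        rw [hBij]
        ring
      rw [Finset.sum_congr rfl fun j _ => this j, ← Finset.mul_sum, hz, mul_zero]
    have hdetR : (B.map (Int.cast : ℤ → ℝ)).det ≠ 0 := by
      have h1 : (B.map (Int.cast : ℤ → ℝ)).det = ((B.det : ℝ)) := by
        rw [show (Int.cast : ℤ → ℝ) = ⇑(Int.castRingHom ℝ) from rfl,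
          ← RingHom.mapMatrix_apply, ← RingHom.map_det]
      rw [h1]
      exact_mod_cast hBdet
    have := Matrix.eq_zero_of_mulVec_eq_zero hdetR hrel
    exact congrFun this j0
  have hfin := li.fintype_card_le_finrank
  rw [finrank_euclideanSpace_fin] at hfin
  simp at hfin
end
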